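/- Let X be a random variable on [0,1) with a density function f that is monotone (nonincreasing or nondecreasing) and not almost everywhere constant. Then E(e^{2πiX}) ≠ 0. -/

import Mathlib

open MeasureTheory Real

lemma antitone_density_helper (f : ℝ → ℝ)
    (hInt : IntegrableOn f (Set.Ico (0 : ℝ) 1))
    (hanti : AntitoneOn f (Set.Ico (0 : ℝ) 1))
    (hz : ∫ t in Set.Ico (0 : ℝ) 1, Real.sin (2 * π * t) * f t = 0) :
    f =ᵐ[volume.restrict (Set.Ico (0 : ℝ) 1)] fun _ => f (1/2) := by
  set g : ℝ → ℝ := fun t => Real.sin (2 * π * t) * f t with hg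
  have hsinm : AEStronglyMeasurable (fun t : ℝ => Real.sin (2 * π * t))
      (volume.restrict (Set.Ioc (0:ℝ) 1)) :=
    (by continuity : Continuous fun t : ℝ => Real.sin (2 * π * t)).aestronglyMeasurable
  have hsinbdd : ∃ C, ∀ x : ℝ, ‖Real.sin (2 * π * x)‖ ≤ C :=
    ⟨1, fun x => by rw [Real.norm_eq_abs]; exact abs_le.2 ⟨neg_one_le_sin _, sin_le_one _⟩⟩
  have hIntIoc : IntegrableOn f (Set.Ioc (0:ℝ) 1) :=
    hInt.congr_set_ae (MeasureTheory.Ioc_ae_eq_Icc.trans MeasureTheory.Ico_ae_eq_Icc.symm)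
  have hIntg : IntegrableOn g (Set.Ioc (0:ℝ) 1) := hIntIoc.bdd_mul hsinm (Filter.Eventually.of_forall hsinbdd.choose_spec)
  have hg1 : IntervalIntegrable g volume 0 1 :=
    (intervalIntegrable_iff_integrableOn_Ioc_of_le (by norm_num)).2 hIntg
  have hu1 : Set.uIcc (0:ℝ) (1/2) ⊆ Set.uIcc (0:ℝ) 1 := by
    rw [Set.uIcc_of_le (by norm_num : (0:ℝ) ≤ 1/2), Set.uIcc_of_le (by norm_num : (0:ℝ) ≤ 1)]
    exact Set.Icc_subset_Icc (le_refl _) (by norm_num)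
  have hu2 : Set.uIcc (1/2:ℝ) 1 ⊆ Set.uIcc (0:ℝ) 1 := by
    rw [Set.uIcc_of_le (by norm_num : (1/2:ℝ) ≤ 1), Set.uIcc_of_le (by norm_num : (0:ℝ) ≤ 1)]
    exact Set.Icc_subset_Icc (by norm_num) (le_refl _)
  have hg2 : IntervalIntegrable g volume 0 (1/2) := hg1.mono_set hu1
  have hg3 : IntervalIntegrable g volume (1/2) 1 := hg1.mono_set hu2
  -- the integral over [0,1] as an interval integral
  have hz' : (∫ x in (0:ℝ)..1, g x) = 0 := by
    rw [intervalIntegral.integral_of_le (by norm_num : (0:ℝ) ≤ 1),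
      MeasureTheory.integral_Ioc_eq_integral_Ioo]
    rw [MeasureTheory.integral_Ico_eq_integral_Ioo] at hz
    exact hz
  have hsplit : (∫ x in (0:ℝ)..(1/2), g x) + (∫ x in (1/2:ℝ)..1, g x) = 0 := by
    rw [intervalIntegral.integral_add_adjacent_intervals hg2 hg3, hz']
  -- substitution in the second integral
  have hgshift : ∀ x : ℝ, g (x + 1/2) = -(Real.sin (2 * π * x) * f (x + 1/2)) := by
    intro x
    have : 2 * π * (x + 1/2) = 2 * π * x + π := by ring
    rw [hg]; dsimp only; rw [this, Real.sin_add_pi]; ring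
  have hsub : (∫ x in (1/2:ℝ)..1, g x)
      = -∫ x in (0:ℝ)..(1/2), Real.sin (2 * π * x) * f (x + 1/2) := by
    have h1 : (∫ x in (0:ℝ)..(1/2), g (x + 1/2)) = ∫ x in ((0:ℝ)+1/2)..((1/2:ℝ)+1/2), g x :=
      intervalIntegral.integral_comp_add_right g (1/2)
    rw [show (0:ℝ)+1/2 = 1/2 by norm_num, show (1/2:ℝ)+1/2 = 1 by norm_num] at h1
    rw [← h1]
    rw [intervalIntegral.integral_congr (g := fun x => -(Real.sin (2 * π * x) * f (x + 1/2)))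
      (fun x _ => hgshift x)]
    rw [intervalIntegral.integral_neg]
  have hIshift : IntervalIntegrable (fun x => Real.sin (2 * π * x) * f (x + 1/2))
      volume 0 (1/2) := by
    have h1 : IntervalIntegrable (fun x => g (x + 1/2)) volume (1/2 - 1/2) (1 - 1/2) :=
      hg3.comp_add_right (1/2)
    rw [show (1/2 - 1/2 : ℝ) = 0 by norm_num, show (1 - 1/2 : ℝ) = 1/2 by norm_num] at h1
    have h2 : IntervalIntegrable (fun x => -g (x + 1/2)) volume 0 (1/2) := h1.neg
    refine h2.congr ?_
    intro x _
    dsimp only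
    rw [hgshift x, neg_neg]
  -- combine: the integral of sin(2πx)*(f x - f (x+1/2)) over (0,1/2) is zero
  have hkey : (∫ x in Set.Ioo (0:ℝ) (1/2),
      (Real.sin (2 * π * x) * f x - Real.sin (2 * π * x) * f (x + 1/2))) = 0 := by
    have h1 : (∫ x in (0:ℝ)..(1/2),
        (Real.sin (2 * π * x) * f x - Real.sin (2 * π * x) * f (x + 1/2))) = 0 := by
      rw [intervalIntegral.integral_sub hg2 hIshift]
      have : (∫ x in (0:ℝ)..(1/2), Real.sin (2 * π * x) * f x) = ∫ x in (0:ℝ)..(1/2), g x := by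
        rfl
      rw [this]
      linarith [hsplit, hsub]
    rw [intervalIntegral.integral_of_le (by norm_num : (0:ℝ) ≤ 1/2),
      MeasureTheory.integral_Ioc_eq_integral_Ioo] at h1
    exact h1
  -- integrability of that integrand on Ioo 0 (1/2)
  have hIntkey : IntegrableOn (fun x =>
      Real.sin (2 * π * x) * f x - Real.sin (2 * π * x) * f (x + 1/2)) (Set.Ioo (0:ℝ) (1/2)) := by
    have h2 : IntegrableOn (fun x => Real.sin (2 * π * x) * f x) (Set.Ioc (0:ℝ) (1/2)) :=
      (intervalIntegrable_iff_integrableOn_Ioc_of_le (by norm_num)).1 hg2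
    have h3 : IntegrableOn (fun x => Real.sin (2 * π * x) * f (x + 1/2)) (Set.Ioc (0:ℝ) (1/2)) :=
      (intervalIntegrable_iff_integrableOn_Ioc_of_le (by norm_num)).1 hIshift
    have h4 : IntegrableOn (fun x =>
        Real.sin (2 * π * x) * f x - Real.sin (2 * π * x) * f (x + 1/2))
        (Set.Ioc (0:ℝ) (1/2)) := h2.sub h3
    exact h4.mono_set Set.Ioo_subset_Ioc_self
  -- nonnegativity of the integrand on Ioo 0 (1/2)
  have hnonneg : 0 ≤ᵐ[volume.restrict (Set.Ioo (0:ℝ) (1/2))] fun x =>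
      Real.sin (2 * π * x) * f x - Real.sin (2 * π * x) * f (x + 1/2) := by
    rw [Filter.EventuallyLE, ae_restrict_iff' measurableSet_Ioo]
    refine Filter.Eventually.of_forall fun x hx => ?_
    have hx1 : x ∈ Set.Ico (0:ℝ) 1 := ⟨hx.1.le, by linarith [hx.2]⟩
    have hx2 : x + 1/2 ∈ Set.Ico (0:ℝ) 1 := ⟨by linarith [hx.1], by linarith [hx.2]⟩
    have hsin : 0 ≤ Real.sin (2 * π * x) := by
      apply Real.sin_nonneg_of_nonneg_of_le_pi
      · nlinarith [Real.pi_pos, hx.1]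
      · nlinarith [Real.pi_pos, hx.2]
    have hfle : f (x + 1/2) ≤ f x := hanti hx1 hx2 (by linarith)
    simp only [Pi.zero_apply]
    nlinarith
  -- conclude the integrand vanishes a.e.
  have hae0 := (MeasureTheory.setIntegral_eq_zero_iff_of_nonneg_ae hnonneg hIntkey).1 hkey
  set c := f (1/2) with hc
  -- a.e. on Ioo 0 (1/2), f x = c and f (x + 1/2) = c
  have hae1 : ∀ᵐ x ∂(volume.restrict (Set.Ioo (0:ℝ) (1/2))),
      f x = c ∧ f (x + 1/2) = c := by
    have hmem := ae_restrict_mem (μ := volume) (measurableSet_Ioo (a := (0:ℝ)) (b := 1/2))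
    filter_upwards [hae0, hmem] with x h0 hx
    have hsin : 0 < Real.sin (2 * π * x) := by
      apply Real.sin_pos_of_pos_of_lt_pi
      · have := Real.pi_pos; nlinarith [hx.1]
      · nlinarith [Real.pi_pos, hx.2]
    have heq : f x = f (x + 1/2) := by
      have : Real.sin (2 * π * x) * (f x - f (x + 1/2)) = 0 := by
        simpa [mul_sub] using h0
      rcases mul_eq_zero.1 this with h | h
      · exact absurd h (ne_of_gt hsin)
      · linarith
    have hx1 : x ∈ Set.Ico (0:ℝ) 1 := ⟨hx.1.le, by linarith [hx.2]⟩
    have hx2 : x + 1/2 ∈ Set.Ico (0:ℝ) 1 := ⟨by linarith [hx.1], by linarith [hx.2]⟩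
    have hhalf : (1/2 : ℝ) ∈ Set.Ico (0:ℝ) 1 := by norm_num
    have h1 : f (1/2) ≤ f x := hanti hx1 hhalf (by linarith [hx.2])
    have h2 : f (x + 1/2) ≤ f (1/2) := hanti hhalf hx2 (by linarith [hx.1])
    constructor <;> [skip; skip] <;> rw [← hc] at * <;> linarith
  -- translate the a.e. statement into a measure-zero statement
  set S : Set ℝ := {x | ¬ (f x = c ∧ f (x + 1/2) = c)} with hS
  have hSmeas : volume (S ∩ Set.Ioo (0:ℝ) (1/2)) = 0 := by
    have := hae1
    rw [ae_iff, Measure.restrict_apply' measurableSet_Ioo] at this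
    exact this
  -- the final goal
  rw [Filter.EventuallyEq, ae_iff, Measure.restrict_apply' measurableSet_Ico]
  have hcover : {x : ℝ | ¬ f x = c} ∩ Set.Ico 0 1 ⊆
      ({0} : Set ℝ) ∪ (S ∩ Set.Ioo (0:ℝ) (1/2)) ∪
      ((fun x : ℝ => x + (-(1/2))) ⁻¹' (S ∩ Set.Ioo (0:ℝ) (1/2))) := by
    rintro x ⟨hxne, hx0, hx1⟩
    rcases eq_or_lt_of_le hx0 with h0 | h0
    · exact Or.inl (Or.inl h0.symm)
    rcases lt_trichotomy x (1/2 : ℝ) with hlt | heq | hgt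
    · exact Or.inl (Or.inr ⟨fun h => hxne h.1, h0, hlt⟩)
    · exact absurd (heq ▸ rfl : f x = c) hxne
    · refine Or.inr ?_
      show x + (-(1/2)) ∈ S ∩ Set.Ioo (0:ℝ) (1/2)
      refine ⟨fun h => hxne ?_, by linarith, by linarith⟩
      have : x + (-(1/2)) + 1/2 = x := by ring
      rw [this] at h
      exact h.2
  refine measure_mono_null hcover ?_
  refine measure_union_null (measure_union_null ?_ hSmeas) ?_
  · exact measure_singleton 0
  · rw [measure_preimage_add_right]
    exact hSmeas

/-- If `X` has a monotone density `f` on `[0,1)` that is not a.e. constant `1`,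
then `E(e^{2πiX}) = ∫_{[0,1)} e^{2πix} f(x) dx ≠ 0`. -/
theorem charFun_ne_zero_of_monotone_density (f : ℝ → ℝ)
    (hf_nonneg : ∀ t ∈ Set.Ico (0 : ℝ) 1, 0 ≤ f t)
    (hf_int : ∫ t in Set.Ico (0 : ℝ) 1, f t = 1)
    (hf_mono : MonotoneOn f (Set.Ico (0 : ℝ) 1) ∨ AntitoneOn f (Set.Ico (0 : ℝ) 1))
    (hf_ncst : ¬ f =ᵐ[volume.restrict (Set.Ico (0 : ℝ) 1)] fun _ => 1) :
    (∫ t in Set.Ico (0 : ℝ) 1,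
        Complex.exp (2 * π * Complex.I * t) * (f t : ℂ)) ≠ 0 := by
  intro h
  have hInt : IntegrableOn f (Set.Ico (0 : ℝ) 1) := by
    by_contra hc
    rw [MeasureTheory.integral_undef hc] at hf_int
    norm_num at hf_int
  -- rewrite the exponential argument
  have hexp : ∀ t : ℝ, (2 * π * Complex.I * (t : ℂ)) = ((2 * π * t : ℝ) : ℂ) * Complex.I := by
    intro t; push_cast; ring
  -- integrability of the complex integrand
  have hIntF : IntegrableOn (fun t : ℝ => Complex.exp (2 * π * Complex.I * t) * (f t : ℂ))
      (Set.Ico (0 : ℝ) 1) := by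
    refine (hInt.ofReal).bdd_mul (c := 1) ?_ (Filter.Eventually.of_forall fun x => ?_)
    · exact (Complex.continuous_exp.comp (by continuity)).aestronglyMeasurable
    · rw [hexp x, Complex.norm_exp_ofReal_mul_I]
  -- the imaginary part of the integral
  have h2 : (fun t : ℝ => (Complex.exp (2 * π * Complex.I * t) * (f t : ℂ)).im)
      = fun t => Real.sin (2 * π * t) * f t := by
    funext t
    rw [hexp t, Complex.mul_im, Complex.exp_ofReal_mul_I_im, Complex.exp_ofReal_mul_I_re,
      Complex.ofReal_im, Complex.ofReal_re, mul_zero, zero_add]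
  have hIm : (∫ t in Set.Ico (0 : ℝ) 1, Real.sin (2 * π * t) * f t) = 0 := by
    have h1 := integral_im (μ := volume.restrict (Set.Ico (0 : ℝ) 1)) hIntF
    simp only [RCLike.im_to_complex] at h1
    rw [h, Complex.zero_im] at h1
    rw [← h2]
    exact h1
  -- apply the helper in both monotonicity cases
  have hae : f =ᵐ[volume.restrict (Set.Ico (0 : ℝ) 1)] fun _ => f (1/2) := by
    rcases hf_mono with hmono | hanti
    · have hanti' : AntitoneOn (fun t => -f t) (Set.Ico (0 : ℝ) 1) :=
        fun a ha b hb hab => neg_le_neg (hmono ha hb hab)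
      have hIntneg : IntegrableOn (fun t => -f t) (Set.Ico (0 : ℝ) 1) := hInt.neg
      have hzneg : (∫ t in Set.Ico (0 : ℝ) 1, Real.sin (2 * π * t) * (-f t)) = 0 := by
        have : (fun t => Real.sin (2 * π * t) * (-f t))
            = fun t => -(Real.sin (2 * π * t) * f t) := by funext t; ring
        rw [this, MeasureTheory.integral_neg, hIm, neg_zero]
      have := antitone_density_helper (fun t => -f t) hIntneg hanti' hzneg
      filter_upwards [this] with x hx
      have : -f x = -f (1/2) := hx
      linarith
    · exact antitone_density_helper f hInt hanti hIm
  -- conclude f (1/2) = 1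
  have hc1 : f (1/2) = 1 := by
    have h2 : (∫ t in Set.Ico (0 : ℝ) 1, f t)
        = ∫ t in Set.Ico (0 : ℝ) 1, (fun _ => f (1/2)) t :=
      MeasureTheory.integral_congr_ae hae
    rw [hf_int, MeasureTheory.setIntegral_const] at h2
    rw [Real.volume_real_Ico] at h2
    norm_num at h2
    exact h2.symm
  rw [hc1] at hae
  exact hf_ncst hae
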